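/- Let x(y,z,v) denote the unique minimizer of F(·,y,z,v) over a convex compact set X. Then x(y,z,v) is σ₁-Lipschitz in y with σ₁ = (L_y + r₁ − L_x)/(r₁ − L_x): that is, ‖x(y',z,v) − x(y,z,v)‖ ≤ σ₁‖y'−y‖ for all y, y' ∈ Y. -/

import Mathlib

open scoped RealInnerProductSpace
open Filter Set Topology

/-- Strong-convexity-at-minimizer inequality for `f1 + (r₁/2)‖·−z‖²`. -/
theorem aux_strong {E : Type*} [NormedAddCommGroup E] [InnerProductSpace ℝ E]
    [CompleteSpace E]
    (f1 : E → ℝ) (g1 : E → E) (Lx r₁ : ℝ)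
    (hg : ∀ x, HasGradientAt f1 (g1 x) x)
    (hLip : ∀ x x', ‖g1 x - g1 x'‖ ≤ Lx * ‖x - x'‖)
    (X : Set E) (hXconv : Convex ℝ X) (z : E)
    (x1 : E) (hx1 : x1 ∈ X)
    (hmin : IsMinOn (fun x => f1 x + r₁ / 2 * ‖x - z‖ ^ 2) X x1)
    (x2 : E) (hx2 : x2 ∈ X) :
    f1 x1 + r₁ / 2 * ‖x1 - z‖ ^ 2 + (r₁ - Lx) / 2 * ‖x2 - x1‖ ^ 2
      ≤ f1 x2 + r₁ / 2 * ‖x2 - z‖ ^ 2 := by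
  set d := x2 - x1 with hd
  set c1 : ℝ := ⟪x1 - z, d⟫ with hc1
  set φ : ℝ → ℝ := fun t => f1 (x1 + t • d) + r₁ / 2 * ‖x1 + t • d - z‖ ^ 2 with hφdef
  have key : ∀ t : ℝ, ‖x1 + t • d - z‖ ^ 2
      = ‖x1 - z‖ ^ 2 + (2 * t * c1 + t ^ 2 * ‖d‖ ^ 2) := by
    intro t
    have h1 : x1 + t • d - z = (x1 - z) + t • d := by abel
    rw [h1, norm_add_sq_real, real_inner_smul_right, norm_smul]
    simp [Real.norm_eq_abs, mul_pow, sq_abs, hc1]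
    ring
  have hline : ∀ t : ℝ, HasDerivAt (fun s : ℝ => x1 + s • d) d t := by
    intro t
    simpa using ((hasDerivAt_id t).smul_const d).const_add x1
  have hf' : ∀ t : ℝ, HasDerivAt (fun s : ℝ => f1 (x1 + s • d))
      ⟪g1 (x1 + t • d), d⟫ t := by
    intro t
    have := (hg (x1 + t • d)).hasFDerivAt.comp_hasDerivAt t (hline t)
    simpa [InnerProductSpace.toDual_apply_apply, Function.comp_def] using this
  have hq : ∀ t : ℝ, HasDerivAt (fun s : ℝ => r₁ / 2 * ‖x1 + s • d - z‖ ^ 2)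
      (r₁ / 2 * (2 * c1 + 2 * t * ‖d‖ ^ 2)) t := by
    intro t
    have e : (fun s : ℝ => r₁ / 2 * ‖x1 + s • d - z‖ ^ 2)
        = fun s : ℝ => r₁ / 2 * (‖x1 - z‖ ^ 2 + (2 * s * c1 + s ^ 2 * ‖d‖ ^ 2)) := by
      funext s; rw [key s]
    rw [e]
    have hA : HasDerivAt (fun s : ℝ => 2 * s * c1) (2 * c1) t := by
      simpa using ((hasDerivAt_id t).const_mul 2).mul_const c1
    have hB : HasDerivAt (fun s : ℝ => s ^ 2 * ‖d‖ ^ 2) (2 * t * ‖d‖ ^ 2) t := by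
      have := (hasDerivAt_pow 2 t).mul_const (‖d‖ ^ 2)
      exact this.congr_deriv (by push_cast; ring)
    simpa using (((hA.add hB).const_add (‖x1 - z‖ ^ 2)).const_mul (r₁ / 2))
  have hφ : ∀ t : ℝ, HasDerivAt φ
      (⟪g1 (x1 + t • d), d⟫ + r₁ / 2 * (2 * c1 + 2 * t * ‖d‖ ^ 2)) t :=
    fun t => (hf' t).add (hq t)
  have hmem : ∀ t ∈ Set.Icc (0:ℝ) 1, x1 + t • d ∈ X := by
    intro t ht
    have h1 : x1 + t • d = (1 - t) • x1 + t • x2 := by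
      rw [hd, smul_sub, sub_smul, one_smul]; abel
    rw [h1]
    exact hXconv hx1 hx2 (by linarith [ht.2]) ht.1 (by ring)
  have hφmin : ∀ t ∈ Set.Icc (0:ℝ) 1, φ 0 ≤ φ t := by
    intro t ht
    have h := isMinOn_iff.mp hmin (x1 + t • d) (hmem t ht)
    simpa [hφdef] using h
  set g0 : ℝ := ⟪g1 x1, d⟫ + r₁ / 2 * (2 * c1) with hg0def
  have hg0 : 0 ≤ g0 := by
    have h0 := (hφ 0)
    rw [hasDerivAt_iff_tendsto_slope] at h0
    have h0' : Tendsto (slope φ 0) (𝓝[>] (0:ℝ))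
        (𝓝 (⟪g1 (x1 + (0:ℝ) • d), d⟫ + r₁ / 2 * (2 * c1 + 2 * 0 * ‖d‖ ^ 2))) :=
      h0.mono_left (nhdsWithin_mono 0 (fun x hx => ne_of_gt hx))
    have heven : ∀ᶠ t in 𝓝[>] (0:ℝ), 0 ≤ slope φ 0 t := by
      filter_upwards [Ioo_mem_nhdsGT_of_mem (Set.mem_Ico.mpr ⟨le_refl 0, zero_lt_one⟩)]
        with t ht
      have hle : φ 0 ≤ φ t := hφmin t ⟨ht.1.le, ht.2.le⟩
      rw [slope_def_field]
      apply div_nonneg (by linarith) (by linarith [ht.1])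
    have := ge_of_tendsto h0' heven
    rw [hg0def]
    simpa using this
  set ψ : ℝ → ℝ := fun t => φ t - ((r₁ - Lx) / 2 * ‖d‖ ^ 2 * t ^ 2 + g0 * t) with hψdef
  have hψd : ∀ t : ℝ, HasDerivAt ψ
      (⟪g1 (x1 + t • d), d⟫ + r₁ / 2 * (2 * c1 + 2 * t * ‖d‖ ^ 2)
        - ((r₁ - Lx) / 2 * ‖d‖ ^ 2 * (2 * t) + g0)) t := by
    intro t
    apply (hφ t).sub
    have h1 : HasDerivAt (fun s : ℝ => (r₁ - Lx) / 2 * ‖d‖ ^ 2 * s ^ 2)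
        ((r₁ - Lx) / 2 * ‖d‖ ^ 2 * (2 * t)) t := by
      have := (hasDerivAt_pow 2 t).const_mul ((r₁ - Lx) / 2 * ‖d‖ ^ 2)
      exact this.congr_deriv (by push_cast; ring)
    have h2 : HasDerivAt (fun s : ℝ => g0 * s) g0 t := by
      simpa using (hasDerivAt_id t).const_mul g0
    exact h1.add h2
  have hmono : MonotoneOn ψ (Set.Icc (0:ℝ) 1) := by
    apply monotoneOn_of_deriv_nonneg (convex_Icc 0 1)
    · exact fun t _ => (hψd t).differentiableAt.continuousAt.continuousWithinAt
    · exact fun t _ => (hψd t).differentiableAt.differentiableWithinAt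
    · intro t ht
      rw [interior_Icc] at ht
      rw [(hψd t).deriv]
      have hdiff : ‖g1 (x1 + t • d) - g1 x1‖ ≤ Lx * (t * ‖d‖) := by
        have h := hLip (x1 + t • d) x1
        rw [add_sub_cancel_left, norm_smul, Real.norm_eq_abs, abs_of_pos ht.1] at h
        exact h
      have hmul := mul_le_mul_of_nonneg_right hdiff (norm_nonneg d)
      have hI := (abs_le.mp (abs_real_inner_le_norm (g1 (x1 + t • d) - g1 x1) d)).1
      have hexp : ⟪g1 (x1 + t • d), d⟫
          = ⟪g1 x1, d⟫ + ⟪g1 (x1 + t • d) - g1 x1, d⟫ := by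
        rw [inner_sub_left]; ring
      rw [hexp, hg0def]
      nlinarith [hI, hmul]
  have hfinal := hmono (Set.left_mem_Icc.mpr zero_le_one)
    (Set.right_mem_Icc.mpr zero_le_one) zero_le_one
  have hψ0 : ψ 0 = φ 0 := by simp [hψdef]
  have hψ1 : ψ 1 = φ 1 - ((r₁ - Lx) / 2 * ‖d‖ ^ 2 + g0) := by
    simp [hψdef]
  have hφ0 : φ 0 = f1 x1 + r₁ / 2 * ‖x1 - z‖ ^ 2 := by simp [hφdef]
  have hφ1 : φ 1 = f1 x2 + r₁ / 2 * ‖x2 - z‖ ^ 2 := by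
    have h1 : x1 + (1:ℝ) • d = x2 := by rw [one_smul, hd]; abel
    simp only [hφdef, h1]
  rw [hψ0, hψ1, hφ0, hφ1] at hfinal
  have hg0' : 0 ≤ g0 := hg0
  clear_value g0
  linarith [hg0', hfinal]

/-- Mean-value cross bound. -/
theorem aux_cross {D : Type*} [NormedAddCommGroup D] [InnerProductSpace ℝ D]
    [CompleteSpace D]
    (h1 h2 : D → ℝ) (G1 G2 : D → D) (C : ℝ)
    (hg1 : ∀ w, HasGradientAt h1 (G1 w) w) (hg2 : ∀ w, HasGradientAt h2 (G2 w) w)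
    (hb : ∀ w, ‖G2 w - G1 w‖ ≤ C) (y y' : D) :
    (h2 y - h1 y) - (h2 y' - h1 y') ≤ C * ‖y' - y‖ := by
  have key : ∀ w, HasFDerivAt (fun u => h2 u - h1 u)
      (InnerProductSpace.toDual ℝ D (G2 w - G1 w)) w := by
    intro w
    have := (hg2 w).hasFDerivAt.sub (hg1 w).hasFDerivAt
    rwa [← map_sub] at this
  have h := convex_univ.norm_image_sub_le_of_norm_hasFDerivWithin_le
    (f := fun u => h2 u - h1 u)
    (fun w _ => (key w).hasFDerivWithinAt)
    (fun w _ => by rw [LinearIsometryEquiv.norm_map]; exact hb w)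
    (Set.mem_univ y) (Set.mem_univ y')
  rw [Real.norm_eq_abs] at h
  have h2' : -(C * ‖y' - y‖) ≤ (h2 y' - h1 y') - (h2 y - h1 y) := by
    simpa using (abs_le.mp h).1
  linarith

/-- the minimizer `x(y,z,v)` of `F(·,y,z,v)` over the compact
convex set `X` is `σ₁`-Lipschitz in `y` with `σ₁ = (L_y + r₁ − L_x)/(r₁ − L_x)`. -/
theorem stmt_2
    {E D : Type*} [NormedAddCommGroup E] [InnerProductSpace ℝ E] [CompleteSpace E]
    [NormedAddCommGroup D] [InnerProductSpace ℝ D] [CompleteSpace D]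
    (f : E → D → ℝ) (gx : E → D → E) (gy : E → D → D) (Lx Ly r₁ r₂ : ℝ)
    (hr₁ : r₁ > Lx) (hr₂ : r₂ > 0)
    (X : Set E) (Y : Set D)
    (hXc : IsCompact X) (hXconv : Convex ℝ X) (hXne : X.Nonempty)
    (hYc : IsCompact Y) (hYconv : Convex ℝ Y) (hYne : Y.Nonempty)
    (hgradx : ∀ x y, HasGradientAt (fun x' => f x' y) (gx x y) x)
    (hgrady : ∀ x y, HasGradientAt (fun y' => f x y') (gy x y) y)
    (hLipx : ∀ x x' y y', ‖gx x y - gx x' y'‖ ≤ Lx * (‖x - x'‖ + ‖y - y'‖))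
    (hLipy : ∀ x x' y y', ‖gy x y - gy x' y'‖ ≤ Ly * (‖x - x'‖ + ‖y - y'‖))
    (F : E → D → E → D → ℝ)
    (hF : ∀ x y z v, F x y z v
      = f x y + r₁ / 2 * ‖x - z‖ ^ 2 - r₂ / 2 * ‖y - v‖ ^ 2)
    (xm : D → E → D → E)
    (hxm : ∀ y z v, xm y z v ∈ X ∧ IsMinOn (fun x => F x y z v) X (xm y z v)) :
    ∀ y ∈ Y, ∀ y' ∈ Y, ∀ (z : E) (v : D),
      ‖xm y' z v - xm y z v‖ ≤ (Ly + r₁ - Lx) / (r₁ - Lx) * ‖y' - y‖ := by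
  intro y hy y' hy' z v
  by_cases hyy : y' = y
  · subst hyy; simp
  · obtain ⟨hx1X, hmin1⟩ := hxm y z v
    obtain ⟨hx2X, hmin2⟩ := hxm y' z v
    set x1 := xm y z v with hx1def
    set x2 := xm y' z v with hx2def
    have hN : 0 < ‖y' - y‖ := by
      rw [norm_pos_iff, sub_ne_zero]; exact hyy
    have hμ : 0 < r₁ - Lx := sub_pos.mpr hr₁
    -- transfer minimality
    have hmin1' : IsMinOn (fun x => f x y + r₁ / 2 * ‖x - z‖ ^ 2) X x1 := by
      rw [isMinOn_iff]
      intro x hx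
      have := isMinOn_iff.mp hmin1 x hx
      rw [hF, hF] at this
      linarith
    have hmin2' : IsMinOn (fun x => f x y' + r₁ / 2 * ‖x - z‖ ^ 2) X x2 := by
      rw [isMinOn_iff]
      intro x hx
      have := isMinOn_iff.mp hmin2 x hx
      rw [hF, hF] at this
      linarith
    have hA1 := aux_strong (fun x => f x y) (fun x => gx x y) Lx r₁
      (fun x => hgradx x y)
      (fun a b => by simpa using hLipx a b y y)
      X hXconv z x1 hx1X hmin1' x2 hx2X
    have hA2 := aux_strong (fun x => f x y') (fun x => gx x y') Lx r₁
      (fun x => hgradx x y')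
      (fun a b => by simpa using hLipx a b y' y')
      X hXconv z x2 hx2X hmin2' x1 hx1X
    have hB := aux_cross (fun w => f x1 w) (fun w => f x2 w)
      (fun w => gy x1 w) (fun w => gy x2 w) (Ly * ‖x2 - x1‖)
      (fun w => hgrady x1 w) (fun w => hgrady x2 w)
      (fun w => by simpa using hLipy x2 x1 w w) y y'
    have hrev : ‖x1 - x2‖ = ‖x2 - x1‖ := norm_sub_rev x1 x2
    have hsum : (r₁ - Lx) * ‖x2 - x1‖ ^ 2 ≤ Ly * ‖x2 - x1‖ * ‖y' - y‖ := by
      rw [hrev] at hA2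
      linarith [hA1, hA2, hB]
    have hLy : 0 ≤ Ly := by
      have h := hLipy x1 x1 y y'
      have h2 : ‖gy x1 y - gy x1 y'‖ ≤ Ly * ‖y - y'‖ := by simpa using h
      have h3 : (0:ℝ) ≤ Ly * ‖y - y'‖ := le_trans (norm_nonneg _) h2
      have h4 : 0 < ‖y - y'‖ := by rw [norm_pos_iff, sub_ne_zero]; exact fun hc => hyy hc.symm
      nlinarith [h3, h4]
    rw [div_mul_eq_mul_div, le_div_iff₀ hμ]
    nlinarith [hsum, mul_pos hμ hN, norm_nonneg (x2 - x1), mul_nonneg hLy hN.le]
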